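/- Suppose F:Ω→Y is analytic, x*∈Ω, β = ‖F'(x*)†‖, γ := sup_{n>1} (β‖F⁽ⁿ⁾(x*)/n!‖)^{1/(n−1)} < +∞, and B(x*,1/γ) ⊆ Ω. Then for all x ∈ B(x*,1/γ), β‖F''(x)‖ ≤ 2γ/(1 − γ‖x−x*‖)³. -/

import Mathlib

open scoped NNReal ENNReal

/-- Polarization bound for symmetric continuous bilinear maps on an inner product space. -/
lemma stmt_19_polarization {X Y : Type*}
    [NormedAddCommGroup X] [InnerProductSpace ℝ X]
    [NormedAddCommGroup Y] [NormedSpace ℝ Y]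
    (D : X →L[ℝ] X →L[ℝ] Y) (C : ℝ) (hC : 0 ≤ C)
    (hsymm : ∀ v w, D v w = D w v)
    (hdiag : ∀ y, ‖D y y‖ ≤ 2 * C * ‖y‖ ^ 2) :
    ∀ u v, ‖D u v‖ ≤ 2 * C * (‖u‖ * ‖v‖) := by
  have key : ∀ u v, ‖D u v‖ ≤ C * (‖u‖ ^ 2 + ‖v‖ ^ 2) := by
    intro u v
    have hpol : (4 : ℝ) • D u v = D (u + v) (u + v) - D (u - v) (u - v) := by
      simp only [map_add, map_sub, ContinuousLinearMap.add_apply, ContinuousLinearMap.sub_apply]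
      rw [hsymm v u]
      module
    have h4 : ‖(4:ℝ) • D u v‖ = 4 * ‖D u v‖ := by
      rw [norm_smul]; norm_num
    have : 4 * ‖D u v‖ ≤ 2 * C * ‖u + v‖ ^ 2 + 2 * C * ‖u - v‖ ^ 2 := by
      rw [← h4, hpol]
      exact (norm_sub_le _ _).trans (add_le_add (hdiag _) (hdiag _))
    have hpar : ‖u + v‖ ^ 2 + ‖u - v‖ ^ 2 = 2 * (‖u‖ ^ 2 + ‖v‖ ^ 2) := by
      have := parallelogram_law_with_norm ℝ u v
      ring_nf
      ring_nf at this
      nlinarith [this]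
    nlinarith [this, hpar]
  intro u v
  rcases eq_or_ne u 0 with rfl | hu
  · simp
  rcases eq_or_ne v 0 with rfl | hv
  · simp
  have hun : 0 < ‖u‖ := norm_pos_iff.2 hu
  have hvn : 0 < ‖v‖ := norm_pos_iff.2 hv
  set s : ℝ := Real.sqrt (‖v‖ / ‖u‖) with hs
  have hspos : 0 < s := Real.sqrt_pos.2 (by positivity)
  have hs2 : s ^ 2 = ‖v‖ / ‖u‖ := Real.sq_sqrt (by positivity)
  have heq : D (s • u) (s⁻¹ • v) = D u v := by
    simp only [map_smul, ContinuousLinearMap.smul_apply, smul_smul,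
      inv_mul_cancel₀ hspos.ne', one_smul]
  have := key (s • u) (s⁻¹ • v)
  rw [heq] at this
  have h1 : ‖s • u‖ ^ 2 = s ^ 2 * ‖u‖ ^ 2 := by
    rw [norm_smul, mul_pow, Real.norm_eq_abs, sq_abs]
  have h2 : ‖s⁻¹ • v‖ ^ 2 = (s ^ 2)⁻¹ * ‖v‖ ^ 2 := by
    rw [norm_smul, mul_pow, Real.norm_eq_abs, sq_abs, inv_pow]
  have e1 : s ^ 2 * ‖u‖ ^ 2 = ‖v‖ * ‖u‖ := by
    rw [hs2]; field_simp
  have e2 : (s ^ 2)⁻¹ * ‖v‖ ^ 2 = ‖u‖ * ‖v‖ := by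
    rw [hs2]; field_simp
  calc ‖D u v‖ ≤ C * (‖s • u‖ ^ 2 + ‖s⁻¹ • v‖ ^ 2) := this
    _ = 2 * C * (‖u‖ * ‖v‖) := by rw [h1, h2, e1, e2]; ring

set_option maxHeartbeats 1000000 in
/-- Smale-type estimate: if `F` is analytic on `Ω`,
`γ = sup_{n>1} (β ‖F⁽ⁿ⁾(x*)/n!‖)^{1/(n-1)} < ∞` and `B(x*, 1/γ) ⊆ Ω`, then for all
`x ∈ B(x*, 1/γ)` one has `β ‖F''(x)‖ ≤ 2γ / (1 - γ ‖x - x*‖)³`. -/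
theorem stmt_19 {X Y : Type*}
    [NormedAddCommGroup X] [InnerProductSpace ℝ X] [CompleteSpace X]
    [NormedAddCommGroup Y] [InnerProductSpace ℝ Y] [CompleteSpace Y]
    (Ω : Set X) (hΩ : IsOpen Ω)
    (F : X → Y) (hF : AnalyticOnNhd ℝ F Ω)
    (xs : X) (hxs : xs ∈ Ω) (β : ℝ) (hβ : 0 < β)
    (γ : ℝ) (hγpos : 0 < γ)
    (hbdd : BddAbove (Set.range fun n : {n : ℕ // 1 < n} =>
      (β * ‖iteratedFDeriv ℝ n.1 F xs‖ / (n.1.factorial : ℝ)) ^ ((n.1 - 1 : ℝ)⁻¹)))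
    (hγ : γ = ⨆ n : {n : ℕ // 1 < n},
      (β * ‖iteratedFDeriv ℝ n.1 F xs‖ / (n.1.factorial : ℝ)) ^ ((n.1 - 1 : ℝ)⁻¹))
    (hball : Metric.ball xs (1 / γ) ⊆ Ω) :
    ∀ x ∈ Metric.ball xs (1 / γ),
      β * ‖iteratedFDeriv ℝ 2 F x‖ ≤ 2 * γ / (1 - γ * ‖x - xs‖) ^ 3 := by
  set q : FormalMultilinearSeries ℝ X Y :=
    fun n => (n.factorial : ℝ)⁻¹ • iteratedFDeriv ℝ n F xs with hq_def
  have hinvγ : (0:ℝ) < 1/γ := by positivity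
  -- coefficient bound
  have hqnorm : ∀ n, 2 ≤ n → ‖q n‖ ≤ γ ^ (n - 1) / β := by
    intro n hn
    have hterm : (β * ‖iteratedFDeriv ℝ n F xs‖ / (n.factorial : ℝ)) ^ (((n : ℝ) - 1)⁻¹) ≤ γ := by
      rw [hγ]
      exact le_ciSup hbdd ⟨n, hn⟩
    set a : ℝ := β * ‖iteratedFDeriv ℝ n F xs‖ / (n.factorial : ℝ) with ha_def
    have ha0 : 0 ≤ a := by positivity
    have hepos : (0:ℝ) < (n : ℝ) - 1 := by
      have : (2:ℝ) ≤ n := by exact_mod_cast hn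
      linarith
    have haγ : a ≤ γ ^ ((n:ℝ) - 1) := by
      calc a = (a ^ (((n:ℝ) - 1)⁻¹)) ^ ((n:ℝ) - 1) := by
              rw [← Real.rpow_mul ha0, inv_mul_cancel₀ hepos.ne', Real.rpow_one]
        _ ≤ γ ^ ((n:ℝ) - 1) := Real.rpow_le_rpow (by positivity) hterm hepos.le
    have hcast : γ ^ ((n:ℝ) - 1) = γ ^ (n - 1) := by
      rw [← Real.rpow_natCast]
      congr 1
      have : (1:ℕ) ≤ n := by omega
      push_cast [Nat.cast_sub this]
      ring
    have hfin : ‖q n‖ ≤ ‖iteratedFDeriv ℝ n F xs‖ / (n.factorial : ℝ) := by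
      have := ContinuousMultilinearMap.opNorm_smul_le
        ((n.factorial : ℝ)⁻¹) (iteratedFDeriv ℝ n F xs)
      rw [Real.norm_eq_abs, abs_of_pos (by positivity)] at this
      rw [div_eq_inv_mul]
      exact this
    refine hfin.trans ?_
    rw [div_le_div_iff₀ (by positivity) hβ]
    rw [hcast] at haγ
    rw [ha_def] at haγ
    rw [div_le_iff₀ (by positivity : (0:ℝ) < (n.factorial:ℝ))] at haγ
    nlinarith [haγ, Nat.factorial_pos n, hβ]
  -- radius bound
  have hrad : ENNReal.ofReal (1/γ) ≤ q.radius := by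
    refine ENNReal.le_of_forall_nnreal_lt (fun t ht => ?_)
    have ht' : (t:ℝ) < 1/γ := by
      rw [← ENNReal.ofReal_coe_nnreal] at ht
      exact (ENNReal.ofReal_lt_ofReal_iff hinvγ).1 ht
    apply FormalMultilinearSeries.le_radius_of_summable
    have hsummaj : Summable (fun n : ℕ => (γ * t)^n / (β * γ)) := by
      apply Summable.div_const
      apply summable_geometric_of_lt_one (by positivity)
      calc γ * t < γ * (1/γ) := by exact mul_lt_mul_of_pos_left ht' hγpos
        _ = 1 := by field_simp
    refine hsummaj.of_norm_bounded_eventually ?_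
    have : ∀ᶠ n in Filter.atTop, ‖‖q n‖ * (t:ℝ)^n‖ ≤ (γ * t)^n / (β * γ) := by
      filter_upwards [Filter.eventually_ge_atTop 2] with n hn
      have h1 : ‖q n‖ * (t:ℝ)^n ≤ (γ^(n-1)/β) * t^n :=
        mul_le_mul_of_nonneg_right (hqnorm n hn) (by positivity)
      rw [Real.norm_eq_abs, abs_of_nonneg (by positivity)]
      refine h1.trans (le_of_eq ?_)
      have hγn : γ ^ n = γ^(n-1) * γ := by
        rw [← pow_succ]; congr 1; omega
      rw [mul_pow, hγn]
      field_simp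
    rw [Nat.cofinite_eq_atTop]
    exact this
  have hrpos : (0:ℝ≥0∞) < ENNReal.ofReal (1/γ) := ENNReal.ofReal_pos.2 hinvγ
  -- local expansion : F agrees with q.sum near xs
  obtain ⟨p, rp, hp⟩ := hF xs hxs
  have hqsum_local : ∀ᶠ z in nhds xs, F z = q.sum (z - xs) := by
    have hrp : (0:ℝ≥0∞) < min rp (ENNReal.ofReal (1/γ)) := lt_min hp.r_pos hrpos
    filter_upwards [EMetric.ball_mem_nhds xs hrp] with z hz
    rw [EMetric.mem_ball] at hz
    have hed : edist (z - xs) (0:X) = edist z xs := by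
      rw [edist_dist, edist_dist, dist_eq_norm, dist_eq_norm, sub_zero]
    have hz1 : z - xs ∈ Metric.eball (0:X) rp := by
      rw [EMetric.mem_ball, hed]
      exact lt_of_lt_of_le hz (min_le_left _ _)
    have hz2 : z - xs ∈ Metric.eball (0:X) q.radius := by
      rw [EMetric.mem_ball, hed]
      exact lt_of_lt_of_le hz ((min_le_right _ _).trans hrad)
    have hS1 : HasSum (fun n => q n (fun _ => z - xs)) (F (xs + (z - xs))) := by
      have h := hp.hasSum_iteratedFDeriv hz1
      have hfun : (fun n => q n (fun _ => z - xs)) =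
          (fun n => (n.factorial:ℝ)⁻¹ • iteratedFDeriv ℝ n F xs (fun _ => z - xs)) := by
        funext n
        show ((n.factorial : ℝ)⁻¹ • iteratedFDeriv ℝ n F xs) (fun _ => z - xs) = _
        simp
      rw [hfun]
      exact h
    have hS2 : HasSum (fun n => q n (fun _ => z - xs)) (q.sum (z - xs)) := q.hasSum hz2
    have := hS1.unique hS2
    simpa using this
  -- g := shifted sum of q
  set g : X → Y := fun z => q.sum (z - xs) with hg_def
  have hg : HasFPowerSeriesOnBall g q xs (ENNReal.ofReal (1/γ)) := by
    refine ⟨hrad, hrpos, ?_⟩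
    intro y hy
    have hy' : y ∈ EMetric.ball (0:X) q.radius := lt_of_lt_of_le hy hrad
    have := q.hasSum hy'
    simpa [hg_def] using this
  have hballeq : Metric.eball xs (ENNReal.ofReal (1/γ)) = Metric.ball xs (1/γ) := by
    ext z
    rw [EMetric.mem_ball, Metric.mem_ball, edist_lt_ofReal]
  -- identity principle
  have heqOn : Set.EqOn F g (Metric.ball xs (1/γ)) := by
    apply AnalyticOnNhd.eqOn_of_preconnected_of_eventuallyEq (𝕜 := ℝ)
      (hF.mono hball) (hballeq ▸ hg.analyticOnNhd)
      ((convex_ball xs (1/γ)).isPreconnected) (Metric.mem_ball_self hinvγ)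
    exact hqsum_local
  -- global power series for F
  have hq : HasFPowerSeriesOnBall F q xs (ENNReal.ofReal (1/γ)) := by
    refine ⟨hrad, hrpos, ?_⟩
    intro y hy
    have h1 : xs + y ∈ Metric.ball xs (1/γ) := by
      rw [EMetric.mem_ball, edist_lt_ofReal, dist_zero_right] at hy
      rw [Metric.mem_ball, dist_eq_norm]
      simpa using hy
    rw [heqOn h1]
    exact hg.hasSum hy
  -- main estimate
  intro x hx
  set z : X := x - xs with hz_def
  set r : ℝ := ‖z‖ with hr_def
  have hr0 : 0 ≤ r := norm_nonneg _
  have hrlt : r < 1/γ := by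
    rw [hr_def, hz_def, ← dist_eq_norm]
    exact hx
  have htt : γ * r < 1 := by
    calc γ * r < γ * (1/γ) := mul_lt_mul_of_pos_left hrlt hγpos
      _ = 1 := by field_simp
  have htt0 : 0 ≤ γ * r := by positivity
  have h1m : (0:ℝ) < 1 - γ * r := by linarith
  have hden : (0:ℝ) < (1 - γ * r) ^ 3 := by positivity
  -- change origin
  have hznn : (‖z‖₊ : ℝ≥0∞) < ENNReal.ofReal (1/γ) := by
    rw [← ENNReal.ofReal_coe_nnreal]
    exact (ENNReal.ofReal_lt_ofReal_iff hinvγ).2 hrlt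
  have hco := hq.changeOrigin hznn
  rw [show xs + z = x by rw [hz_def]; abel] at hco
  set c := q.changeOrigin z 2 with hc_def
  -- bound on ‖c‖
  have hcbound : ‖c‖ ≤ (γ / β) * (1 / (1 - γ * r) ^ 3) := by
    have hSum : HasSum (fun l : ℕ => (γ / β) * (((l+2).choose 2 : ℝ) * (γ * r)^l))
        ((γ / β) * (1 / (1 - γ * r) ^ 3)) := by
      have := hasSum_choose_mul_geometric_of_norm_lt_one (𝕜 := ℝ) 2 (r := γ * r)
        (by rwa [Real.norm_eq_abs, abs_of_nonneg htt0])
      exact this.mul_left (γ / β)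
    have hterm : ∀ l : ℕ, ‖q.changeOriginSeries 2 l (fun _ => z)‖ ≤
        (γ / β) * (((l+2).choose 2 : ℝ) * (γ * r)^l) := by
      intro l
      have h1 : ‖q.changeOriginSeries 2 l (fun _ => z)‖ ≤
          ‖q.changeOriginSeries 2 l‖ * r ^ l := by
        have := (q.changeOriginSeries 2 l).le_opNorm (fun _ => z)
        simpa [Finset.prod_const] using this
      have h2 : ‖q.changeOriginSeries 2 l‖ ≤ ((2+l).choose l : ℝ) * ‖q (2+l)‖ := by
        have hns := q.nnnorm_changeOriginSeries_le_tsum 2 l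
        rw [tsum_fintype, Finset.sum_const, Finset.card_univ, Fintype.card_finset_len,
          Fintype.card_fin] at hns
        have h' : ‖q.changeOriginSeries 2 l‖₊ ≤ ((2+l).choose l : ℝ≥0) * ‖q (2+l)‖₊ := by
          simpa [nsmul_eq_mul] using hns
        exact_mod_cast h'
      have h3 : ‖q (2+l)‖ ≤ γ ^ (l+1) / β := by
        have := hqnorm (2+l) (by omega)
        rwa [show 2 + l - 1 = l + 1 by omega] at this
      have hchoose : ((2+l).choose l : ℝ) = ((l+2).choose 2 : ℝ) := by
        norm_cast
        have h := Nat.choose_symm (show l ≤ l + 2 by omega)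
        rw [show l + 2 - l = 2 by omega] at h
        rw [show 2 + l = l + 2 by omega]
        exact h.symm
      calc ‖q.changeOriginSeries 2 l (fun _ => z)‖
          ≤ ‖q.changeOriginSeries 2 l‖ * r ^ l := h1
        _ ≤ (((2+l).choose l : ℝ) * ‖q (2+l)‖) * r ^ l :=
            mul_le_mul_of_nonneg_right h2 (by positivity)
        _ ≤ (((2+l).choose l : ℝ) * (γ ^ (l+1) / β)) * r ^ l := by
            have : ((2+l).choose l : ℝ) * ‖q (2+l)‖ ≤ ((2+l).choose l : ℝ) * (γ ^ (l+1) / β) :=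
              mul_le_mul_of_nonneg_left h3 (by positivity)
            exact mul_le_mul_of_nonneg_right this (by positivity)
        _ = (γ / β) * (((l+2).choose 2 : ℝ) * (γ * r)^l) := by
            rw [hchoose, mul_pow, pow_succ]
            ring
    have : ‖∑' l : ℕ, q.changeOriginSeries 2 l (fun _ => z)‖ ≤
        (γ / β) * (1 / (1 - γ * r) ^ 3) :=
      tsum_of_norm_bounded hSum hterm
    exact this
  -- symmetry and diagonal values
  have hxΩ : x ∈ Ω := hball hx
  have hcd : ContDiffAt ℝ 2 F x := (hF x hxΩ).contDiffAt
  have hsymm := hcd.isSymmSndFDerivAt (by norm_num)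
  set D := fderiv ℝ (fderiv ℝ F) x with hD_def
  have hdiag : ∀ y, ‖D y y‖ ≤ 2 * ‖c‖ * ‖y‖ ^ 2 := by
    intro y
    have hfs := hco.factorial_smul (y := y) 2
    have hDy : D y y = iteratedFDeriv ℝ 2 F x (fun _ => y) := by
      rw [iteratedFDeriv_two_apply]
    rw [hDy, ← hfs]
    have : ‖(Nat.factorial 2) • (q.changeOrigin z 2) (fun _ => y)‖ =
        2 * ‖(q.changeOrigin z 2) (fun _ => y)‖ := by
      have h2s : (Nat.factorial 2 : ℕ) • ((q.changeOrigin z 2) (fun _ => y)) =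
          (2:ℝ) • ((q.changeOrigin z 2) (fun _ => y)) := by
        rw [← Nat.cast_smul_eq_nsmul ℝ]
        norm_num
      rw [h2s, norm_smul]
      norm_num
    rw [this]
    have h1 : ‖(q.changeOrigin z 2) (fun _ => y)‖ ≤ ‖c‖ * ‖y‖ ^ 2 := by
      have := (q.changeOrigin z 2).le_opNorm (fun _ => y)
      simpa [hc_def, Finset.prod_const] using this
    nlinarith [h1, norm_nonneg c, norm_nonneg y]
  have hpolar := stmt_19_polarization D ‖c‖ (norm_nonneg c) hsymm hdiag
  -- norm bound for the iterated derivative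
  have hBnorm : ‖iteratedFDeriv ℝ 2 F x‖ ≤ 2 * ‖c‖ := by
    apply (iteratedFDeriv ℝ 2 F x).opNorm_le_bound (by positivity)
    intro m
    rw [iteratedFDeriv_two_apply]
    calc ‖D (m 0) (m 1)‖ ≤ 2 * ‖c‖ * (‖m 0‖ * ‖m 1‖) := hpolar (m 0) (m 1)
      _ = 2 * ‖c‖ * ∏ i, ‖m i‖ := by rw [Fin.prod_univ_two]
  -- conclusion
  calc β * ‖iteratedFDeriv ℝ 2 F x‖ ≤ β * (2 * ‖c‖) :=
        mul_le_mul_of_nonneg_left hBnorm hβ.le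
    _ ≤ β * (2 * ((γ / β) * (1 / (1 - γ * r) ^ 3))) := by
        have := mul_le_mul_of_nonneg_left hcbound (by norm_num : (0:ℝ) ≤ 2)
        exact mul_le_mul_of_nonneg_left this hβ.le
    _ = 2 * γ / (1 - γ * r) ^ 3 := by
        field_simp
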